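/- Let R be a commutative Noetherian ring of prime characteristic p > 0 graded by ℕ^n, let I be a nonzero homogeneous ideal of R, let s ≥ 1 be a real number, and let δ = (δ_1, …, δ_n) ∈ ℕ^n where δ_i is the minimum of the i-th coordinate of deg f over all nonzero homogeneous f ∈ I. If x is a homogeneous element lying in the weak s-closure of I but not in the tight closure I*, then deg x ≥ s·δ (i.e., each coordinate of deg x is at least s times the corresponding coordinate of δ). -/

import Mathlib

open Pointwise

/-- `R°`: the set of elements of `R` not contained in any minimal prime of `R`. -/
def RCirc (R : Type*) [CommRing R] : Set R :=
  {c | ∀ P ∈ minimalPrimes R, c ∉ P}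

/-- The `q`-th Frobenius power `I^[q]` of an ideal `I`, generated by `q`-th powers
of elements of `I`. -/
def frobPow {R : Type*} [CommRing R] (I : Ideal R) (q : ℕ) : Ideal R :=
  Ideal.span ((fun f => f ^ q) '' (I : Set R))

/-- The `(s,q)` mixed power `I^(s,q) = I^⌈sq⌉ + I^[q]`. -/
noncomputable def mixedPow {R : Type*} [CommRing R] (I : Ideal R) (s : ℝ) (q : ℕ) : Ideal R :=
  I ^ ⌈s * (q : ℝ)⌉₊ + frobPow I q

/-- The weak `s`-closure of `I`: elements `x` such that there is `c ∈ R°` with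
`c·x^q ∈ I^(s,q)` for all sufficiently large powers `q = p^e` of `p`. -/
def weakCl {R : Type*} [CommRing R] (p : ℕ) (I : Ideal R) (s : ℝ) : Set R :=
  {x | ∃ c ∈ RCirc R, ∃ N : ℕ, ∀ e : ℕ, N ≤ e → c * x ^ p ^ e ∈ mixedPow I s (p ^ e)}

/-- The tight closure `I*` of `I`. -/
def tightCl {R : Type*} [CommRing R] (p : ℕ) (I : Ideal R) : Set R :=
  {x | ∃ c ∈ RCirc R, ∃ N : ℕ, ∀ e : ℕ, N ≤ e → c * x ^ p ^ e ∈ frobPow I (p ^ e)}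

/-- The integral closure of `I`: elements `x` such that there is `c ∈ R°` with
`c·x^n ∈ I^n` for all sufficiently large `n`. -/
def intCl {R : Type*} [CommRing R] (I : Ideal R) : Set R :=
  {x | ∃ c ∈ RCirc R, ∃ N : ℕ, ∀ n : ℕ, N ≤ n → c * x ^ n ∈ I ^ n}

/-- The `α`-th rational power `I_α` of `I`, for rational `α = a/b ≥ 0`:
elements `x` with `x^b` in the integral closure of `I^a`. -/
noncomputable def ratPow {R : Type*} [CommRing R] (I : Ideal R) (α : ℚ) : Set R :=
  {x | x ^ α.den ∈ intCl (I ^ α.num.toNat)}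

/-- `μ(I)`: the minimal number of generators of `I`. -/
noncomputable def mu {R : Type*} [CommRing R] (I : Ideal R) : ℕ :=
  sInf {m : ℕ | ∃ s : Finset R, s.card = m ∧ Ideal.span (s : Set R) = I}

/-- An ideal has positive height if it is not contained in any minimal prime. -/
def PosHeight {R : Type*} [CommRing R] (I : Ideal R) : Prop :=
  ∀ P ∈ minimalPrimes R, ¬ I ≤ P

section AuxStmt8

variable {R : Type*} {n : ℕ} [CommRing R] (𝒜 : (Fin n → ℕ) → AddSubgroup R) [GradedRing 𝒜]

/-- Ideal generated by homogeneous elements whose degree's `i`-th coordinate is at least `t`. -/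
def degIdeal (i : Fin n) (t : ℕ) : Ideal R :=
  Ideal.span {y | ∃ d : Fin n → ℕ, y ∈ 𝒜 d ∧ t ≤ d i}

lemma mem_degIdeal_of {i : Fin n} {t : ℕ} {y : R}
    (h : ∀ d, (DirectSum.decompose 𝒜 y d : R) ≠ 0 → t ≤ d i) : y ∈ degIdeal 𝒜 i t := by
  classical
  rw [← DirectSum.sum_support_decompose 𝒜 y]
  refine Ideal.sum_mem _ fun d hd => Ideal.subset_span ⟨d, SetLike.coe_mem _, h d ?_⟩
  rw [DFinsupp.mem_support_iff] at hd
  exact fun h0 => hd (Subtype.ext h0)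

lemma degIdeal_mul_le (i : Fin n) (t u : ℕ) :
    degIdeal 𝒜 i t * degIdeal 𝒜 i u ≤ degIdeal 𝒜 i (t + u) := by
  rw [degIdeal, degIdeal, Ideal.span_mul_span']
  refine Ideal.span_le.2 ?_
  intro z hz
  obtain ⟨a, ⟨d, had, htd⟩, b, ⟨e, hbe, hue⟩, rfl⟩ := Set.mem_mul.1 hz
  exact Ideal.subset_span ⟨d + e, SetLike.mul_mem_graded had hbe, by
    simpa using Nat.add_le_add htd hue⟩

lemma pow_le_degIdeal {I : Ideal R} {i : Fin n} {t : ℕ} (hIt : I ≤ degIdeal 𝒜 i t) :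
    ∀ m : ℕ, I ^ m ≤ degIdeal 𝒜 i (m * t)
  | 0 => by
      rw [pow_zero, Nat.zero_mul]
      refine fun y _ => mem_degIdeal_of 𝒜 fun d _ => Nat.zero_le _
  | (m + 1) => by
      rw [pow_succ]
      calc I ^ m * I ≤ degIdeal 𝒜 i (m * t) * degIdeal 𝒜 i t :=
            Ideal.mul_mono (pow_le_degIdeal hIt m) hIt
        _ ≤ degIdeal 𝒜 i (m * t + t) := degIdeal_mul_le 𝒜 i _ _
        _ = degIdeal 𝒜 i ((m + 1) * t) := by ring_nf

lemma degIdeal_comp {i : Fin n} {t : ℕ} {y : R} (hy : y ∈ degIdeal 𝒜 i t) :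
    ∀ d, (DirectSum.decompose 𝒜 y d : R) ≠ 0 → t ≤ d i := by
  classical
  induction hy using Submodule.span_induction with
  | mem z hz =>
      obtain ⟨e, hze, hte⟩ := hz
      intro d hd
      by_cases hde : d = e
      · exact hde ▸ hte
      · exact absurd (DirectSum.decompose_of_mem_ne 𝒜 hze (Ne.symm hde) : _) hd
  | zero => intro d hd; simp at hd
  | add a b _ _ ha hb =>
      intro d hd
      rw [DirectSum.decompose_add, DirectSum.add_apply, AddSubgroup.coe_add] at hd
      by_cases h0 : (DirectSum.decompose 𝒜 a d : R) = 0
      · exact hb d (by rw [h0, zero_add] at hd; exact hd)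
      · exact ha d h0
  | smul r a _ ha =>
      intro d hd
      rw [smul_eq_mul] at hd
      have hra : r * a = ∑ e ∈ DFinsupp.support (DirectSum.decompose 𝒜 a),
          r * (DirectSum.decompose 𝒜 a e : R) := by
        conv_lhs => rw [← DirectSum.sum_support_decompose 𝒜 a]
        rw [Finset.mul_sum]
      rw [hra] at hd
      have hsum : (DirectSum.decompose 𝒜 (∑ e ∈ DFinsupp.support (DirectSum.decompose 𝒜 a),
          r * (DirectSum.decompose 𝒜 a e : R)) d : R)
          = ∑ e ∈ DFinsupp.support (DirectSum.decompose 𝒜 a),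
            (DirectSum.decompose 𝒜 (r * (DirectSum.decompose 𝒜 a e : R)) d : R) := by
        rw [← GradedRing.proj_apply, map_sum]
        simp [GradedRing.proj_apply]
      rw [hsum] at hd
      obtain ⟨e, he, hne⟩ := Finset.exists_ne_zero_of_sum_ne_zero hd
      have hea : e ≤ d := by
        by_contra hcon
        exact hne (DirectSum.coe_decompose_mul_of_right_mem_of_not_le 𝒜 (SetLike.coe_mem _) hcon)
      have hae : (DirectSum.decompose 𝒜 a e : R) ≠ 0 :=
        fun h => DFinsupp.mem_support_iff.1 he (ZeroMemClass.coe_eq_zero.1 h)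
      exact le_trans (ha e hae) (hea i)

lemma pow_isHomogeneous' {I : Ideal R} (hI : I.IsHomogeneous 𝒜) :
    ∀ m : ℕ, (I ^ m).IsHomogeneous 𝒜
  | 0 => by rw [pow_zero, Ideal.one_eq_top]; exact Ideal.IsHomogeneous.top 𝒜
  | (m + 1) => by
      rw [pow_succ]
      exact Ideal.IsHomogeneous.mul (pow_isHomogeneous' hI m) hI

lemma frobPow_isHomogeneous (p : ℕ) (hp : p.Prime) (hcp : CharP R p) (e : ℕ)
    {I : Ideal R} (hI : I.IsHomogeneous 𝒜) : (frobPow I (p ^ e)).IsHomogeneous 𝒜 := by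
  haveI := Fact.mk hp
  obtain ⟨S, rfl⟩ := (Ideal.IsHomogeneous.iff_exists 𝒜 _).1 hI
  have key : frobPow (Ideal.span ((↑) '' S)) (p ^ e)
      = Ideal.map (iterateFrobenius R p e) (Ideal.span ((↑) '' S)) := by
    rw [Ideal.map]
    rw [frobPow]
    exact congrArg _ (Set.image_congr' (fun x => (iterateFrobenius_def p e x).symm))
  rw [key, Ideal.map_span]
  refine Ideal.homogeneous_span 𝒜 _ ?_
  rintro y ⟨z, ⟨w, hw, rfl⟩, rfl⟩
  obtain ⟨g, hg⟩ := w.2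
  exact ⟨p ^ e • g, by rw [iterateFrobenius_def]; exact SetLike.pow_mem_graded _ hg⟩

end AuxStmt8

/-- in an `ℕⁿ`-graded ring, if `x` is homogeneous of degree `gx`, lies in the
weak `s`-closure of a nonzero homogeneous ideal `I` but not in its tight closure, then
`deg x ≥ s·δ` coordinatewise, where `δ_i` is the minimal `i`-th coordinate of the degree of
a nonzero homogeneous element of `I`. -/
theorem stmt8 {R : Type*} {n : ℕ} [CommRing R] [IsNoetherianRing R]
    (p : ℕ) (hp : p.Prime) (hcp : CharP R p)
    (𝒜 : (Fin n → ℕ) → AddSubgroup R) [GradedRing 𝒜]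
    (I : Ideal R) (hI : I.IsHomogeneous 𝒜) (hI0 : I ≠ ⊥) (s : ℝ) (hs : 1 ≤ s)
    (δ : Fin n → ℕ)
    (hδ : ∀ i, δ i = sInf {d : ℕ | ∃ f ∈ I, f ≠ 0 ∧ ∃ g : Fin n → ℕ, f ∈ 𝒜 g ∧ g i = d})
    (x : R) (gx : Fin n → ℕ) (hx : x ∈ 𝒜 gx)
    (hxw : x ∈ weakCl p I s) (hxt : x ∉ tightCl p I) :
    ∀ i, s * (δ i : ℝ) ≤ (gx i : ℝ) := by
  classical
  intro i
  by_contra hlt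
  push_neg at hlt
  obtain ⟨c, hcR, N, hcw⟩ := hxw
  haveI := Fact.mk hp
  have hxt' : ∀ N' : ℕ, ∃ e, N' ≤ e ∧ c * x ^ p ^ e ∉ frobPow I (p ^ e) := by
    intro N'
    by_contra hcon
    push_neg at hcon
    exact hxt ⟨c, hcR, N', fun e he => hcon e he⟩
  have hε0 : (0 : ℝ) < s * δ i - gx i := by linarith
  set G : ℕ := (DFinsupp.support (DirectSum.decompose 𝒜 c)).sup (fun g => g i) with hGdef
  obtain ⟨M, hM⟩ := pow_unbounded_of_one_lt ((G : ℝ) / (s * δ i - gx i))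
    (by exact_mod_cast hp.one_lt : (1:ℝ) < p)
  obtain ⟨e, he, hnot⟩ := hxt' (max N M)
  set q : ℕ := p ^ e with hqdef
  have hq0 : 0 < q := Nat.pow_pos hp.pos
  have hGq : (G : ℝ) < (s * δ i - gx i) * q := by
    rw [div_lt_iff₀ hε0] at hM
    have hpe : ((p : ℝ)) ^ M ≤ (q : ℝ) := by
      rw [hqdef]
      push_cast
      exact pow_le_pow_right₀ (by exact_mod_cast hp.one_lt.le) (le_trans (le_max_right N M) he)
    calc (G : ℝ) < (p : ℝ) ^ M * (s * δ i - gx i) := hM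
      _ ≤ (q : ℝ) * (s * δ i - gx i) := by
          apply mul_le_mul_of_nonneg_right hpe hε0.le
      _ = (s * δ i - gx i) * q := by ring
  have hmem : c * x ^ q ∈ mixedPow I s q := hcw e (le_trans (le_max_left _ _) he)
  rw [mixedPow, Submodule.add_eq_sup, Submodule.mem_sup] at hmem
  obtain ⟨u, hu, v, hv, huv⟩ := hmem
  have hex : ∃ d, (DirectSum.decompose 𝒜 (c * x ^ q) d : R) ∉ frobPow I q := by
    by_contra hcon
    push_neg at hcon
    apply hnot
    rw [← DirectSum.sum_support_decompose 𝒜 (c * x ^ q)]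
    exact Ideal.sum_mem _ fun d _ => hcon d
  obtain ⟨d, hd⟩ := hex
  have hd0 : (DirectSum.decompose 𝒜 (c * x ^ q) d : R) ≠ 0 :=
    fun h => hd (h ▸ (frobPow I q).zero_mem)
  have hxq : x ^ q ∈ 𝒜 (q • gx) := SetLike.pow_mem_graded q hx
  have hle : q • gx ≤ d := by
    by_contra hcon
    exact hd0 (DirectSum.coe_decompose_mul_of_right_mem_of_not_le 𝒜 hxq hcon)
  have heq2 : (DirectSum.decompose 𝒜 (c * x ^ q) d : R)
      = (DirectSum.decompose 𝒜 c (d - q • gx) : R) * x ^ q :=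
    DirectSum.coe_decompose_mul_of_right_mem_of_le 𝒜 hxq hle
  have hcne : (DirectSum.decompose 𝒜 c (d - q • gx) : R) ≠ 0 := by
    intro h
    apply hd0
    rw [heq2, h, zero_mul]
  have hsupp : (d - q • gx) ∈ DFinsupp.support (DirectSum.decompose 𝒜 c) :=
    DFinsupp.mem_support_iff.2 fun h => hcne (by rw [h, ZeroMemClass.coe_zero])
  have hdG : (d - q • gx) i ≤ G := Finset.le_sup (f := fun g => g i) hsupp
  have hdle : d i ≤ G + q * gx i := by
    have h2 : d i - q * gx i ≤ G := by simpa using hdG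
    exact Nat.sub_le_iff_le_add.1 h2
  set m : ℕ := ⌈s * (q : ℝ)⌉₊ with hmdef
  have hImh : (I ^ m).IsHomogeneous 𝒜 := pow_isHomogeneous' 𝒜 hI m
  have hfrh : (frobPow I q).IsHomogeneous 𝒜 := frobPow_isHomogeneous 𝒜 p hp hcp e hI
  have ha1 : (DirectSum.decompose 𝒜 u d : R) ∈ I ^ m := hImh d hu
  have ha2 : (DirectSum.decompose 𝒜 v d : R) ∈ frobPow I q := hfrh d hv
  have hsplit : (DirectSum.decompose 𝒜 (c * x ^ q) d : R)
      = (DirectSum.decompose 𝒜 u d : R) + (DirectSum.decompose 𝒜 v d : R) := by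
    rw [← huv, DirectSum.decompose_add, DirectSum.add_apply, AddSubgroup.coe_add]
  have ha1ne : (DirectSum.decompose 𝒜 u d : R) ≠ 0 := by
    intro h
    apply hd
    rw [hsplit, h, zero_add]
    exact ha2
  have hIdeg : I ≤ degIdeal 𝒜 i (δ i) := by
    intro f hf
    refine mem_degIdeal_of 𝒜 fun g hg => ?_
    rw [hδ i]
    exact Nat.sInf_le ⟨(DirectSum.decompose 𝒜 f g : R), hI g hf, hg, g, SetLike.coe_mem _, rfl⟩
  have hum : (DirectSum.decompose 𝒜 u d : R) ∈ degIdeal 𝒜 i (m * δ i) :=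
    pow_le_degIdeal 𝒜 hIdeg m ha1
  have hmdi : m * δ i ≤ d i := by
    refine degIdeal_comp 𝒜 hum d ?_
    rw [DirectSum.decompose_of_mem_same 𝒜 (SetLike.coe_mem _)]
    exact ha1ne
  have c1 : (m : ℝ) * δ i ≤ d i := by exact_mod_cast hmdi
  have c2 : (d i : ℝ) ≤ G + q * gx i := by exact_mod_cast hdle
  have c3 : s * (q : ℝ) ≤ m := Nat.le_ceil _
  have c4 : (0 : ℝ) ≤ δ i := Nat.cast_nonneg _
  nlinarith [mul_le_mul_of_nonneg_right c3 c4]
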